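/- Let α > 0, θ > 2, and p ≥ 1 with p > 2/(1+2α). Every coefficient array β satisfying the Besov condition B^α_{p,∞} satisfies the condition A^α_θ. -/

import Mathlib

open scoped BigOperators

/-- A coefficient array `β` is square-summable if `Σ_{j,k} β_{j,k}² < ∞`. -/
def SqSummable (β : ℕ → ℕ → ℝ) : Prop :=
  Summable fun j : ℕ => ∑ k ∈ Finset.range (2 ^ j), (β j k) ^ 2

/-- The Besov condition `B^α_{p,∞}`. -/
def CondBesov (β : ℕ → ℕ → ℝ) (α p : ℝ) : Prop :=
  ∃ C : ℝ, ∀ j : ℕ,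
    (2 : ℝ) ^ ((j : ℝ) * p * (α + 1 / 2 - 1 / p)) *
      ∑ k ∈ Finset.range (2 ^ j), |β j k| ^ p ≤ C

/-- `N(J,j) = min(⌊2^J (j−J+1)^{−θ}⌋, 2^j)`. -/
noncomputable def NJj (θ : ℝ) (J j : ℕ) : ℕ :=
  min ⌊(2 : ℝ) ^ J * ((j : ℝ) - (J : ℝ) + 1) ^ (-θ)⌋₊ (2 ^ j)

/-- `t_{j,J}(β)`: the minimum over subsets `A` of `{0,…,2^j−1}` of cardinality `N(J,j)`
of `Σ_{k ∉ A} β_{j,k}²`, i.e. the sum of squares of all but the `N(J,j)` largest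
`|β_{j,k}|` at level `j`. -/
noncomputable def tTail (β : ℕ → ℕ → ℝ) (θ : ℝ) (J j : ℕ) : ℝ :=
  sInf {x : ℝ | ∃ A : Finset ℕ, A ⊆ Finset.range (2 ^ j) ∧ A.card = NJj θ J j ∧
    x = ∑ k ∈ Finset.range (2 ^ j) \ A, (β j k) ^ 2}

/-- The condition `A^α_θ`. -/
def CondA (β : ℕ → ℕ → ℝ) (α θ : ℝ) : Prop :=
  ∃ C : ℝ, ∀ J : ℕ,
    (2 : ℝ) ^ (2 * (J : ℝ) * α) *
      ∑' j : ℕ, (if J ≤ j then tTail β θ J j else 0) ≤ C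



/-- Selecting the `n` largest values of `f` on `s`. -/
lemma sel_lemma (s : Finset ℕ) (f : ℕ → ℝ) :
    ∀ n, n ≤ s.card → ∃ A, A ⊆ s ∧ A.card = n ∧ ∀ a ∈ A, ∀ b ∈ s \ A, f b ≤ f a := by
  intro n
  induction n with
  | zero => intro _; exact ⟨∅, Finset.empty_subset s, rfl, by simp⟩
  | succ n ih =>
    intro hn
    obtain ⟨A, hAs, hcard, hA⟩ := ih (Nat.le_of_succ_le hn)
    have hne : (s \ A).Nonempty := by
      rw [← Finset.card_pos, Finset.card_sdiff_of_subset hAs]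
      omega
    obtain ⟨b₀, hb₀, hmax⟩ := Finset.exists_max_image (s \ A) f hne
    have hb₀A : b₀ ∉ A := (Finset.mem_sdiff.1 hb₀).2
    refine ⟨insert b₀ A, ?_, ?_, ?_⟩
    · exact Finset.insert_subset (Finset.mem_sdiff.1 hb₀).1 hAs
    · rw [Finset.card_insert_of_notMem hb₀A, hcard]
    · intro a ha b hb
      have hb' : b ∈ s \ A := by
        rw [Finset.mem_sdiff] at hb ⊢
        exact ⟨hb.1, fun h => hb.2 (Finset.mem_insert_of_mem h)⟩
      rcases Finset.mem_insert.1 ha with rfl | ha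
      · exact hmax b hb'
      · exact hA a ha b hb'

lemma half_le_floor {x : ℝ} (hx : 1 ≤ x) : x / 2 ≤ (⌊x⌋₊ : ℝ) := by
  rcases le_or_gt 2 x with h | h
  · have := Nat.sub_one_lt_floor x
    linarith
  · have h1 : (1:ℕ) ≤ ⌊x⌋₊ := Nat.le_floor (by exact_mod_cast hx)
    have h2 : (1:ℝ) ≤ (⌊x⌋₊:ℝ) := by exact_mod_cast h1
    linarith

lemma sq_le_aux {x m p : ℝ} (hx : |x| ≤ m) (hp1 : 1 ≤ p) (hp2 : p ≤ 2) :
    x ^ 2 ≤ m ^ (2 - p) * |x| ^ p := by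
  have hp0 : (0:ℝ) < p := by linarith
  rcases eq_or_lt_of_le (abs_nonneg x) with h0 | h0
  · have hx0 : |x| = 0 := h0.symm
    rw [← sq_abs, hx0, Real.zero_rpow hp0.ne']
    norm_num
  · have key : x ^ 2 = |x| ^ (2 - p) * |x| ^ p := by
      rw [← Real.rpow_add h0, sub_add_cancel, ← sq_abs]
      rw [show ((2:ℝ)) = ((2:ℕ):ℝ) by norm_num, Real.rpow_natCast]
    rw [key]
    exact mul_le_mul_of_nonneg_right
      (Real.rpow_le_rpow (abs_nonneg x) hx (by linarith))
      (Real.rpow_nonneg (abs_nonneg x) p)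

lemma NJj_le (θ : ℝ) (J j : ℕ) : NJj θ J j ≤ 2 ^ j := min_le_right _ _

lemma tTail_bddBelow (β : ℕ → ℕ → ℝ) (θ : ℝ) (J j : ℕ) :
    BddBelow {x : ℝ | ∃ A : Finset ℕ, A ⊆ Finset.range (2 ^ j) ∧ A.card = NJj θ J j ∧
      x = ∑ k ∈ Finset.range (2 ^ j) \ A, (β j k) ^ 2} := by
  refine ⟨0, ?_⟩
  rintro x ⟨A, -, -, rfl⟩
  exact Finset.sum_nonneg fun k _ => sq_nonneg _

lemma tTail_le (β : ℕ → ℕ → ℝ) (θ : ℝ) (J j : ℕ) {A : Finset ℕ}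
    (hA : A ⊆ Finset.range (2 ^ j)) (hcard : A.card = NJj θ J j) :
    tTail β θ J j ≤ ∑ k ∈ Finset.range (2 ^ j) \ A, (β j k) ^ 2 :=
  csInf_le (tTail_bddBelow β θ J j) ⟨A, hA, hcard, rfl⟩

lemma tTail_nonneg (β : ℕ → ℕ → ℝ) (θ : ℝ) (J j : ℕ) : 0 ≤ tTail β θ J j := by
  apply le_csInf
  · obtain ⟨A, hA, hcard⟩ := Finset.exists_subset_card_eq
      (s := Finset.range (2 ^ j)) (n := NJj θ J j) (by simpa using NJj_le θ J j)
    exact ⟨_, A, hA, hcard, rfl⟩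
  · rintro x ⟨A, -, -, rfl⟩
    exact Finset.sum_nonneg fun k _ => sq_nonneg _

lemma tTail_le_total (β : ℕ → ℕ → ℝ) (θ : ℝ) (J j : ℕ) :
    tTail β θ J j ≤ ∑ k ∈ Finset.range (2 ^ j), (β j k) ^ 2 := by
  obtain ⟨A, hA, hcard⟩ := Finset.exists_subset_card_eq
    (s := Finset.range (2 ^ j)) (n := NJj θ J j) (by simpa using NJj_le θ J j)
  refine (tTail_le β θ J j hA hcard).trans ?_
  exact Finset.sum_le_sum_of_subset_of_nonneg (Finset.sdiff_subset) fun k _ _ => sq_nonneg _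

lemma summable_aux {q r : ℝ} (h0 : 0 ≤ r) (h1 : r < 1) :
    Summable fun l : ℕ => ((l : ℝ) + 1) ^ q * r ^ l := by
  have hm := summable_pow_mul_geometric_of_norm_lt_one (R := ℝ) ⌈q⌉₊
    (r := r) (by rwa [Real.norm_eq_abs, abs_of_nonneg h0])
  have h2 : Summable fun l : ℕ => ((l : ℝ) + 1) ^ ⌈q⌉₊ * r ^ l := by
    rcases eq_or_lt_of_le h0 with rfl | hr0
    · apply summable_of_ne_finset_zero (s := {0})
      intro l hl
      have : l ≠ 0 := by simpa using hl
      simp [zero_pow this]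
    · have hs := (_root_.summable_nat_add_iff 1).2 hm
      have hs2 := hs.mul_left r⁻¹
      refine hs2.congr fun l => ?_
      push_cast
      field_simp
      ring
  refine Summable.of_nonneg_of_le (fun l => by positivity) (fun l => ?_) h2
  have hle : ((l : ℝ) + 1) ^ q ≤ ((l : ℝ) + 1) ^ (⌈q⌉₊ : ℝ) :=
    Real.rpow_le_rpow_of_exponent_le (by simp [Nat.cast_nonneg]) (Nat.le_ceil q)
  rw [Real.rpow_natCast] at hle
  exact mul_le_mul_of_nonneg_right hle (pow_nonneg h0 l)

lemma besov_two {β : ℕ → ℕ → ℝ} {α p : ℝ} (hp : 2 ≤ p)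
    (h : CondBesov β α p) : CondBesov β α 2 := by
  obtain ⟨C₀, hC₀⟩ := h
  have hp0 : (0:ℝ) < p := by linarith
  set C := max C₀ 1 with hCdef
  have hC1 : (1:ℝ) ≤ C := le_max_right _ _
  have hC0 : (0:ℝ) < C := by linarith
  refine ⟨C ^ (2 / p), fun j => ?_⟩
  set σ := α + 1 / 2 - 1 / p with hσdef
  have hBes : ∑ k ∈ Finset.range (2 ^ j), |β j k| ^ p ≤ C * (2:ℝ) ^ (-((j:ℝ) * p * σ)) := by
    have h := (hC₀ j).trans (le_max_left C₀ 1)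
    have h2 : (0:ℝ) < (2:ℝ) ^ ((j:ℝ) * p * σ) := Real.rpow_pos_of_pos two_pos _
    rw [← le_div_iff₀' h2] at h
    rwa [Real.rpow_neg (by norm_num), ← div_eq_mul_inv]
  have hBnn : (0:ℝ) ≤ ∑ k ∈ Finset.range (2 ^ j), |β j k| ^ p :=
    Finset.sum_nonneg fun k _ => Real.rpow_nonneg (abs_nonneg _) _
  have hHolder : ∑ k ∈ Finset.range (2 ^ j), |β j k| ^ (2:ℝ) ≤
      ((2:ℝ) ^ ((j:ℝ) * (1 - 2 / p))) *
        (∑ k ∈ Finset.range (2 ^ j), |β j k| ^ p) ^ (2 / p) := by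
    have key := Real.inner_le_weight_mul_Lp_of_nonneg (Finset.range (2 ^ j))
      (p := p / 2) (by linarith) (fun _ => (1:ℝ)) (fun k => |β j k| ^ (2:ℝ))
      (fun _ => zero_le_one) (fun k => Real.rpow_nonneg (abs_nonneg _) _)
    simp only [one_mul] at key
    have e1 : ∀ k ∈ Finset.range (2 ^ j), (|β j k| ^ (2:ℝ)) ^ (p / 2) = |β j k| ^ p := by
      intro k _
      rw [← Real.rpow_mul (abs_nonneg _)]
      congr 1
      field_simp
    rw [Finset.sum_congr rfl e1] at key
    have e2 : ∑ k ∈ Finset.range (2 ^ j), (1:ℝ) = (2:ℝ) ^ (j:ℝ) := by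
      rw [Finset.sum_const, Finset.card_range, nsmul_eq_mul, mul_one,
        Real.rpow_natCast]
      push_cast
      ring
    rw [e2] at key
    have e3 : (p / 2)⁻¹ = 2 / p := by rw [inv_div]
    rw [e3] at key
    refine key.trans (le_of_eq ?_)
    rw [← Real.rpow_mul (by norm_num : (0:ℝ) ≤ 2)]
  calc (2 : ℝ) ^ ((j : ℝ) * 2 * (α + 1 / 2 - 1 / 2)) *
        ∑ k ∈ Finset.range (2 ^ j), |β j k| ^ (2:ℝ)
      ≤ (2 : ℝ) ^ ((j : ℝ) * 2 * (α + 1 / 2 - 1 / 2)) *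
        (((2:ℝ) ^ ((j:ℝ) * (1 - 2 / p))) *
          (C * (2:ℝ) ^ (-((j:ℝ) * p * σ))) ^ (2 / p)) := by
        apply mul_le_mul_of_nonneg_left _ (Real.rpow_nonneg (by norm_num) _)
        refine hHolder.trans ?_
        apply mul_le_mul_of_nonneg_left _ (Real.rpow_nonneg (by norm_num) _)
        exact Real.rpow_le_rpow hBnn hBes (by positivity)
    _ = C ^ (2 / p) := by
        rw [Real.mul_rpow hC0.le (Real.rpow_nonneg (by norm_num) _),
          ← Real.rpow_mul (by norm_num : (0:ℝ) ≤ 2),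
          show ∀ a b c : ℝ, (2:ℝ)^a * ((2:ℝ)^b * (C^(2/p) * (2:ℝ)^c))
            = C^(2/p) * (2:ℝ)^(a+b+c) by
              intro a b c; rw [Real.rpow_add two_pos, Real.rpow_add two_pos]; ring]
        rw [show (j : ℝ) * 2 * (α + 1 / 2 - 1 / 2) + (j:ℝ) * (1 - 2/p)
            + -((j:ℝ) * p * σ) * (2/p) = 0 by rw [hσdef]; field_simp; ring]
        rw [Real.rpow_zero, mul_one]

lemma tTail_le_of_bound (β : ℕ → ℕ → ℝ) (θ p : ℝ) (J j : ℕ) {A : Finset ℕ} {m B : ℝ}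
    (hA : A ⊆ Finset.range (2 ^ j)) (hcard : A.card = NJj θ J j)
    (hm : 0 ≤ m) (hmb : ∀ b ∈ Finset.range (2 ^ j) \ A, |β j b| ≤ m)
    (hp1 : 1 ≤ p) (hp2 : p ≤ 2)
    (hB : ∑ k ∈ Finset.range (2 ^ j), |β j k| ^ p ≤ B) :
    tTail β θ J j ≤ m ^ (2 - p) * B := by
  refine (tTail_le β θ J j hA hcard).trans ?_
  calc ∑ k ∈ Finset.range (2 ^ j) \ A, (β j k) ^ 2
      ≤ ∑ k ∈ Finset.range (2 ^ j) \ A, m ^ (2 - p) * |β j k| ^ p :=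
        Finset.sum_le_sum fun k hk => sq_le_aux (hmb k hk) hp1 hp2
    _ = m ^ (2 - p) * ∑ k ∈ Finset.range (2 ^ j) \ A, |β j k| ^ p := by
        rw [Finset.mul_sum]
    _ ≤ m ^ (2 - p) * B := by
        apply mul_le_mul_of_nonneg_left _ (Real.rpow_nonneg hm _)
        refine le_trans (Finset.sum_le_sum_of_subset_of_nonneg Finset.sdiff_subset
          fun k _ _ => Real.rpow_nonneg (abs_nonneg _) _) hB

/-- The key per-level estimate. -/
lemma key_bound (β : ℕ → ℕ → ℝ) (θ p : ℝ) (hθ : 0 < θ) (hp1 : 1 ≤ p) (hp2 : p ≤ 2)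
    (J j : ℕ) (hj : J ≤ j) {B : ℝ} (hB0 : 0 < B)
    (hB : ∑ k ∈ Finset.range (2 ^ j), |β j k| ^ p ≤ B) :
    tTail β θ J j ≤
      ((2 * B / ((2:ℝ) ^ (J:ℝ) * ((j:ℝ) - (J:ℝ) + 1) ^ (-θ))) ^ ((1:ℝ)/p)) ^ (2 - p) * B := by
  set x : ℝ := (2:ℝ) ^ (J:ℝ) * ((j:ℝ) - (J:ℝ) + 1) ^ (-θ) with hxdef
  have hbase : (1:ℝ) ≤ (j:ℝ) - (J:ℝ) + 1 := by
    have : (J:ℝ) ≤ (j:ℝ) := Nat.cast_le.2 hj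
    linarith
  have hx0 : 0 < x :=
    mul_pos (Real.rpow_pos_of_pos two_pos _) (Real.rpow_pos_of_pos (by linarith) _)
  have hp0 : (0:ℝ) < p := by linarith
  have hq0 : (0:ℝ) < 2 * B / x := by positivity
  set m : ℝ := (2 * B / x) ^ ((1:ℝ)/p) with hmdef
  have hm0 : (0:ℝ) ≤ m := Real.rpow_nonneg hq0.le _
  have hxfloor : NJj θ J j = min ⌊x⌋₊ (2 ^ j) := by
    rw [NJj, hxdef, Real.rpow_natCast]
  -- extraction of p-th roots
  have root_le : ∀ y D : ℝ, 0 ≤ y → 0 ≤ D → y ^ p ≤ D → y ≤ D ^ ((1:ℝ)/p) := by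
    intro y D hy hD h
    have := Real.rpow_le_rpow (Real.rpow_nonneg hy p) h (by positivity : (0:ℝ) ≤ 1/p)
    rwa [← Real.rpow_mul hy, mul_one_div, div_self hp0.ne', Real.rpow_one] at this
  rcases le_or_gt (2 ^ j) ⌊x⌋₊ with hc | hc
  · -- N = 2^j : nothing remains
    have hN : NJj θ J j = 2 ^ j := by rw [hxfloor, min_eq_right hc]
    refine tTail_le_of_bound β θ p J j le_rfl (by rw [Finset.card_range, hN]) hm0 ?_ hp1 hp2 hB
    intro b hb
    simp at hb
  · have hcle : ⌊x⌋₊ ≤ 2 ^ j := hc.le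
    have hN : NJj θ J j = ⌊x⌋₊ := by rw [hxfloor, min_eq_left hcle]
    rcases Nat.eq_zero_or_pos ⌊x⌋₊ with h0 | h1
    · -- x < 1 : bound everything by B^{1/p}
      have hx1 : x < 1 := by
        by_contra h
        push_neg at h
        have : (1:ℕ) ≤ ⌊x⌋₊ := Nat.le_floor (by exact_mod_cast h)
        omega
      refine tTail_le_of_bound β θ p J j (Finset.empty_subset _)
        (by rw [Finset.card_empty, hN, h0]) hm0 ?_ hp1 hp2 hB
      intro b hb
      have hbmem : b ∈ Finset.range (2 ^ j) := (Finset.mem_sdiff.1 hb).1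
      have h1 : |β j b| ^ p ≤ B :=
        le_trans (Finset.single_le_sum
          (fun k _ => Real.rpow_nonneg (abs_nonneg _) _) hbmem) hB
      have h2 : |β j b| ≤ B ^ ((1:ℝ)/p) := root_le _ _ (abs_nonneg _) hB0.le h1
      refine h2.trans (Real.rpow_le_rpow hB0.le ?_ (by positivity))
      rw [le_div_iff₀ hx0]
      nlinarith
    · -- the main case : remove the ⌊x⌋₊ largest coefficients
      obtain ⟨A, hAs, hcard, hsel⟩ := sel_lemma (Finset.range (2 ^ j))
        (fun k => |β j k|) ⌊x⌋₊ (by rw [Finset.card_range]; exact hcle)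
      have hAne : A.Nonempty := Finset.card_pos.1 (by omega)
      obtain ⟨a₀, ha₀, hmin⟩ := Finset.exists_min_image A (fun k => |β j k|) hAne
      refine tTail_le_of_bound β θ p J j hAs (by rw [hcard, hN]) hm0 ?_ hp1 hp2 hB
      intro b hb
      refine (hsel a₀ ha₀ b hb).trans ?_
      have hx1 : (1:ℝ) ≤ x := by
        have h1 : (1:ℝ) ≤ (⌊x⌋₊:ℝ) := by exact_mod_cast h1
        have h2 : (⌊x⌋₊:ℝ) ≤ x := Nat.floor_le hx0.le
        linarith
      have hfl0 : (0:ℝ) < (⌊x⌋₊:ℝ) := by exact_mod_cast h1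
      have hNa : (⌊x⌋₊:ℝ) * |β j a₀| ^ p ≤ B := by
      -- ⌊x⌋₊ * min^p ≤ ∑_{a∈A} |β a|^p ≤ B
        have hstep : ∀ a ∈ A, |β j a₀| ^ p ≤ |β j a| ^ p := fun a ha =>
          Real.rpow_le_rpow (abs_nonneg _) (hmin a ha) hp0.le
        calc (⌊x⌋₊:ℝ) * |β j a₀| ^ p = ∑ _a ∈ A, |β j a₀| ^ p := by
              rw [Finset.sum_const, hcard, nsmul_eq_mul]
          _ ≤ ∑ a ∈ A, |β j a| ^ p := Finset.sum_le_sum hstep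
          _ ≤ ∑ k ∈ Finset.range (2 ^ j), |β j k| ^ p :=
              Finset.sum_le_sum_of_subset_of_nonneg hAs
                fun k _ _ => Real.rpow_nonneg (abs_nonneg _) _
          _ ≤ B := hB
      have hmono : |β j a₀| ^ p ≤ 2 * B / x := by
        rw [mul_comm] at hNa
        rw [← le_div_iff₀ hfl0] at hNa
        refine hNa.trans ?_
        rw [div_le_div_iff₀ hfl0 hx0]
        have := half_le_floor hx1
        nlinarith
      exact root_le _ _ (abs_nonneg _) hq0.le hmono

theorem stmt8_aux (α θ p : ℝ) (hα : 0 < α) (hθ : 2 < θ) (hp1 : 1 ≤ p) (hple : p ≤ 2)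
    (hp2 : 2 / (1 + 2 * α) < p)
    (β : ℕ → ℕ → ℝ) (hβ : SqSummable β) (hbesov : CondBesov β α p) :
    CondA β α θ := by
  obtain ⟨C₀, hC₀⟩ := hbesov
  set C := max C₀ 1 with hCdef
  have hC1 : (1:ℝ) ≤ C := le_max_right _ _
  have hC0 : (0:ℝ) < C := by linarith
  have hp0 : (0:ℝ) < p := by linarith
  set σ := α + 1 / 2 - 1 / p with hσdef
  have hσ0 : 0 < σ := by
    rw [div_lt_iff₀ (by linarith : (0:ℝ) < 1 + 2 * α)] at hp2
    rw [hσdef, sub_pos, div_lt_iff₀ hp0]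
    nlinarith
  set e := (2 - p) / p with hedef
  have he0 : 0 ≤ e := div_nonneg (by linarith) hp0.le
  have hBes : ∀ j : ℕ, ∑ k ∈ Finset.range (2 ^ j), |β j k| ^ p
      ≤ C * (2:ℝ) ^ (-((j:ℝ) * p * σ)) := by
    intro j
    have h := (hC₀ j).trans (le_max_left C₀ 1)
    have h2 : (0:ℝ) < (2:ℝ) ^ ((j:ℝ) * p * σ) := Real.rpow_pos_of_pos two_pos _
    rw [← le_div_iff₀' h2] at h
    rwa [Real.rpow_neg (by norm_num), ← div_eq_mul_inv]
  set B : ℕ → ℝ := fun j => C * (2:ℝ) ^ (-((j:ℝ) * p * σ)) with hBdef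
  have hB0 : ∀ j, 0 < B j := fun j => mul_pos hC0 (Real.rpow_pos_of_pos two_pos _)
  set r : ℝ := (2:ℝ) ^ (-(2 * σ)) with hrdef
  have hr0 : 0 < r := Real.rpow_pos_of_pos two_pos _
  have hr1 : r < 1 := Real.rpow_lt_one_of_one_lt_of_neg one_lt_two (by linarith)
  set u : ℕ → ℝ := fun l => ((l:ℝ) + 1) ^ (θ * e) * r ^ l with hudef
  have hu0 : ∀ l, 0 ≤ u l := fun l => by
    have : (0:ℝ) < (l:ℝ) + 1 := by positivity
    positivity
  have husum : Summable u := summable_aux hr0.le hr1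
  set K := (2:ℝ) ^ e * C ^ (e + 1) with hKdef
  have hK0 : 0 ≤ K := by positivity
  refine ⟨K * ∑' l, u l, fun J => ?_⟩
  set D : ℝ := K * (2:ℝ) ^ (-(2 * (J:ℝ) * σ) - (J:ℝ) * e) with hDdef
  have hD0 : 0 ≤ D := mul_nonneg hK0 (Real.rpow_nonneg (by norm_num) _)
  -- per-term bound after shifting
  have hterm : ∀ l : ℕ, tTail β θ J (J + l) ≤ D * u l := by
    intro l
    have hkey := key_bound β θ p (by linarith) hp1 hple J (J + l)
      (Nat.le_add_right J l) (hB0 (J + l)) (hBes (J + l))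
    refine hkey.trans (le_of_eq ?_)
    set L : ℝ := (l:ℝ) + 1 with hLdef
    have hL0 : (0:ℝ) < L := by positivity
    have hLθ : (0:ℝ) < L ^ θ := Real.rpow_pos_of_pos hL0 _
    have hcast : ((J + l : ℕ):ℝ) - (J:ℝ) + 1 = L := by push_cast; ring
    rw [hcast]
    set a : ℝ := -(((J:ℝ) + (l:ℝ)) * p * σ) with hadef
    have hBval : B (J + l) = C * (2:ℝ) ^ a := by
      simp only [hBdef, hadef]
      congr 2
      push_cast
      ring
    set y : ℝ := 1 + a - (J:ℝ) with hydef
    have h1 : 2 * B (J + l) / ((2:ℝ) ^ (J:ℝ) * L ^ (-θ)) = C * (2:ℝ) ^ y * L ^ θ := by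
      rw [hBval, Real.rpow_neg hL0.le θ,
        show (2:ℝ) ^ y = 2 * (2:ℝ) ^ a / (2:ℝ) ^ (J:ℝ) by
          rw [hydef, Real.rpow_sub two_pos, Real.rpow_add two_pos, Real.rpow_one]]
      have h2J : (0:ℝ) < (2:ℝ) ^ (J:ℝ) := Real.rpow_pos_of_pos two_pos _
      field_simp
    rw [h1]
    have hz0 : (0:ℝ) ≤ C * (2:ℝ) ^ y * L ^ θ := by positivity
    have h2 : ((C * (2:ℝ) ^ y * L ^ θ) ^ ((1:ℝ)/p)) ^ (2 - p)
        = (C * (2:ℝ) ^ y * L ^ θ) ^ e := by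
      rw [← Real.rpow_mul hz0]
      congr 1
      rw [hedef]
      field_simp
    rw [h2, hBval]
    have h3 : (C * (2:ℝ) ^ y * L ^ θ) ^ e = C ^ e * (2:ℝ) ^ (y * e) * L ^ (θ * e) := by
      rw [Real.mul_rpow (by positivity) (Real.rpow_nonneg hL0.le _),
        Real.mul_rpow hC0.le (Real.rpow_nonneg (by norm_num) _),
        ← Real.rpow_mul (by norm_num : (0:ℝ) ≤ 2), ← Real.rpow_mul hL0.le]
    rw [h3, hDdef, hKdef, hudef]
    dsimp only
    rw [hrdef]
    have hrl : ((2:ℝ) ^ (-(2 * σ))) ^ l = (2:ℝ) ^ (-(2 * σ) * (l:ℝ)) := by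
      rw [← Real.rpow_natCast ((2:ℝ) ^ (-(2 * σ))) l,
        ← Real.rpow_mul (by norm_num : (0:ℝ) ≤ 2)]
    rw [hrl]
    have hCe : C ^ e * C = C ^ (e + 1) := (Real.rpow_add_one hC0.ne' e).symm
    have hexp : y * e + a = e + (-(2 * (J:ℝ) * σ) - (J:ℝ) * e) + -(2 * σ) * (l:ℝ) := by
      rw [hydef, hadef, hedef, hσdef]
      field_simp
      ring
    calc C ^ e * (2:ℝ) ^ (y * e) * L ^ (θ * e) * (C * (2:ℝ) ^ a)
        = (C ^ e * C) * ((2:ℝ) ^ (y * e) * (2:ℝ) ^ a) * L ^ (θ * e) := by ring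
      _ = C ^ (e + 1) * (2:ℝ) ^ (y * e + a) * L ^ (θ * e) := by
          rw [hCe, ← Real.rpow_add two_pos]
      _ = C ^ (e + 1) * ((2:ℝ) ^ e * (2:ℝ) ^ (-(2 * (J:ℝ) * σ) - (J:ℝ) * e)
            * (2:ℝ) ^ (-(2 * σ) * (l:ℝ))) * L ^ (θ * e) := by
          rw [hexp, Real.rpow_add two_pos, Real.rpow_add two_pos]
      _ = (2:ℝ) ^ e * C ^ (e + 1) * (2:ℝ) ^ (-(2 * (J:ℝ) * σ) - (J:ℝ) * e)
            * (L ^ (θ * e) * (2:ℝ) ^ (-(2 * σ) * (l:ℝ))) := by ring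
  -- now the summation over levels
  set f : ℕ → ℝ := fun j => if J ≤ j then tTail β θ J j else 0 with hfdef
  have hfnn : ∀ j, 0 ≤ f j := by
    intro j
    by_cases h : J ≤ j <;> simp [hfdef, h, tTail_nonneg]
  have hfle : ∀ j, f j ≤ ∑ k ∈ Finset.range (2 ^ j), (β j k) ^ 2 := by
    intro j
    by_cases h : J ≤ j <;>
      simp [hfdef, h, tTail_le_total, Finset.sum_nonneg fun k _ => sq_nonneg (β j k)]
  have hfsum : Summable f := Summable.of_nonneg_of_le hfnn hfle hβ
  have hi : Function.Injective (fun l : ℕ => J + l) := fun a b h => by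
    simpa using h
  have hsupp : Function.support f ⊆ Set.range (fun l : ℕ => J + l) := by
    intro j hj
    rcases le_or_gt J j with h | h
    · exact ⟨j - J, by simp; omega⟩
    · exfalso
      apply hj
      simp [hfdef, Nat.not_le.2 h]
  have heq : ∑' l, f (J + l) = ∑' j, f j := hi.tsum_eq hsupp
  have hcomp : ∀ l, f (J + l) = tTail β θ J (J + l) := by
    intro l
    simp [hfdef, Nat.le_add_right]
  have hzero : ∀ x ∉ Set.range (fun l : ℕ => J + l), f x = 0 := by
    intro x hx
    have hx2 : ¬ J ≤ x := by
      intro h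
      exact hx ⟨x - J, by simp; omega⟩
    simp [hfdef, hx2]
  have hsum2 : Summable fun l => f (J + l) := (hi.summable_iff hzero).2 hfsum
  have hle2 : ∑' j, f j ≤ D * ∑' l, u l := by
    rw [← heq, ← tsum_mul_left]
    refine Summable.tsum_le_tsum (fun l => ?_) hsum2 (husum.mul_left D)
    rw [hcomp l]
    exact hterm l
  have hone : (2:ℝ) ^ (2 * (J:ℝ) * α) * (2:ℝ) ^ (-(2 * (J:ℝ) * σ) - (J:ℝ) * e) = 1 := by
    rw [← Real.rpow_add two_pos,
      show 2 * (J:ℝ) * α + (-(2 * (J:ℝ) * σ) - (J:ℝ) * e) = 0 by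
        rw [hσdef, hedef]; field_simp; ring,
      Real.rpow_zero]
  calc (2:ℝ) ^ (2 * (J:ℝ) * α) * ∑' j, f j
      ≤ (2:ℝ) ^ (2 * (J:ℝ) * α) * (D * ∑' l, u l) :=
        mul_le_mul_of_nonneg_left hle2 (Real.rpow_nonneg (by norm_num) _)
    _ = ((2:ℝ) ^ (2 * (J:ℝ) * α) * (2:ℝ) ^ (-(2 * (J:ℝ) * σ) - (J:ℝ) * e))
          * (K * ∑' l, u l) := by rw [hDdef]; ring
    _ = K * ∑' l, u l := by rw [hone, one_mul]

/-- the inclusion `B^α_{p,∞} ⊆ A^α_θ` for `p ≥ 1`, `p > 2/(1+2α)`. -/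
theorem stmt_8 (α θ p : ℝ) (hα : 0 < α) (hθ : 2 < θ) (hp1 : 1 ≤ p)
    (hp2 : 2 / (1 + 2 * α) < p)
    (β : ℕ → ℕ → ℝ) (hβ : SqSummable β) (hbesov : CondBesov β α p) :
    CondA β α θ := by
  rcases le_total p 2 with h | h
  · exact stmt8_aux α θ p hα hθ hp1 h hp2 β hβ hbesov
  · refine stmt8_aux α θ 2 hα hθ one_le_two le_rfl ?_ β hβ (besov_two h hbesov)
    calc 2 / (1 + 2 * α) < 2 / 1 := by
          apply div_lt_div_of_pos_left <;> linarith
      _ = 2 := by norm_num
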